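/- Let C be an identifying code in C_n(1,3) with n ≥ 14. Then every codeword c ∈ C satisfies s(C;c) ≤ 17/6 + 1/2 (indeed s(C;c) is the sum over u ∈ N[c] of 1/|I(C;u)|, which is at most 10/3). -/

import Mathlib

/-- Closed neighbourhood of `u` in the circulant graph `C_n(1,3)`. -/
def nbhd {n : ℕ} (u : ZMod n) : Finset (ZMod n) := {u - 3, u - 1, u, u + 1, u + 3}

/-- Identifying set `I(C;u) = N[u] ∩ C`. -/
def iset {n : ℕ} (C : Finset (ZMod n)) (u : ZMod n) : Finset (ZMod n) := nbhd u ∩ C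

/-- `C` is an identifying code in `C_n(1,3)`. -/
def IsIdentifying {n : ℕ} (C : Finset (ZMod n)) : Prop :=
  (∀ u : ZMod n, (iset C u).Nonempty) ∧
    ∀ u v : ZMod n, u ≠ v → iset C u ≠ iset C v

/-- `C` is a locating-dominating code in `C_n(1,3)`. -/
def IsLocDom {n : ℕ} (C : Finset (ZMod n)) : Prop :=
  (∀ u : ZMod n, (iset C u).Nonempty) ∧
    ∀ u v : ZMod n, u ∉ C → v ∉ C → u ≠ v → iset C u ≠ iset C v

/-- The share of a codeword in `C_n(1,3)`. -/
def share {n : ℕ} (C : Finset (ZMod n)) (c : ZMod n) : ℚ :=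
  ∑ u ∈ nbhd c, (1 : ℚ) / (iset C u).card

theorem share_le (n : ℕ) (hn : 14 ≤ n) (C : Finset (ZMod n))
    (hC : IsIdentifying C) (c : ZMod n) (hc : c ∈ C) :
    share C c ≤ 17 / 6 + 1 / 2 := by
  obtain ⟨hne, hid⟩ := hC
  haveI : NeZero n := ⟨by omega⟩
  have hnz : ∀ m : ℕ, 0 < m → m < 14 → (m : ZMod n) ≠ 0 := by
    intro m hm hm14 h
    rw [ZMod.natCast_eq_zero_iff] at h
    have := Nat.le_of_dvd hm h
    omega
  have h2 : (2 : ZMod n) ≠ 0 := by have := hnz 2 (by norm_num) (by norm_num); push_cast at this; exact this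
  have h3 : (3 : ZMod n) ≠ 0 := by have := hnz 3 (by norm_num) (by norm_num); push_cast at this; exact this
  have h4 : (4 : ZMod n) ≠ 0 := by have := hnz 4 (by norm_num) (by norm_num); push_cast at this; exact this
  have h6 : (6 : ZMod n) ≠ 0 := by have := hnz 6 (by norm_num) (by norm_num); push_cast at this; exact this
  have h1 : (1 : ZMod n) ≠ 0 := by have := hnz 1 (by norm_num) (by norm_num); push_cast at this; exact this
  -- pairwise distinctness of the five neighbours
  have d12 : c - 3 ≠ c - 1 := fun h => h2 (by linear_combination -h)
  have d13 : c - 3 ≠ c := fun h => h3 (by linear_combination -h)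
  have d14 : c - 3 ≠ c + 1 := fun h => h4 (by linear_combination -h)
  have d15 : c - 3 ≠ c + 3 := fun h => h6 (by linear_combination -h)
  have d23 : c - 1 ≠ c := fun h => h1 (by linear_combination -h)
  have d24 : c - 1 ≠ c + 1 := fun h => h2 (by linear_combination -h)
  have d25 : c - 1 ≠ c + 3 := fun h => h4 (by linear_combination -h)
  have d34 : c ≠ c + 1 := fun h => h1 (by linear_combination -h)
  have d35 : c ≠ c + 3 := fun h => h3 (by linear_combination -h)
  have d45 : c + 1 ≠ c + 3 := fun h => h2 (by linear_combination -h)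
  -- c belongs to each identifying set of its neighbours
  have m1 : c ∈ iset C (c - 3) := by
    simp only [iset, nbhd, Finset.mem_inter, Finset.mem_insert, Finset.mem_singleton]
    exact ⟨by right; right; right; right; ring, hc⟩
  have m2 : c ∈ iset C (c - 1) := by
    simp only [iset, nbhd, Finset.mem_inter, Finset.mem_insert, Finset.mem_singleton]
    exact ⟨by right; right; right; left; ring, hc⟩
  have m3 : c ∈ iset C c := by
    simp only [iset, nbhd, Finset.mem_inter, Finset.mem_insert, Finset.mem_singleton]
    exact ⟨by right; right; left; trivial, hc⟩
  have m4 : c ∈ iset C (c + 1) := by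
    simp only [iset, nbhd, Finset.mem_inter, Finset.mem_insert, Finset.mem_singleton]
    exact ⟨by right; left; ring, hc⟩
  have m5 : c ∈ iset C (c + 3) := by
    simp only [iset, nbhd, Finset.mem_inter, Finset.mem_insert, Finset.mem_singleton]
    exact ⟨by left; ring, hc⟩
  -- at most one neighbour has identifying set of size 1
  have hone : ∀ u v : ZMod n, u ≠ v → c ∈ iset C u → c ∈ iset C v →
      (iset C u).card = 1 → (iset C v).card = 1 → False := by
    intro u v huv hu hv h1u h1v
    obtain ⟨a, ha⟩ := Finset.card_eq_one.mp h1u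
    obtain ⟨b, hb⟩ := Finset.card_eq_one.mp h1v
    rw [ha] at hu; rw [hb] at hv
    simp only [Finset.mem_singleton] at hu hv
    exact hid u v huv (by rw [ha, hb, ← hu, ← hv])
  -- bounds on 1/card
  have hb1 : ∀ u : ZMod n, (1 : ℚ) / (iset C u).card ≤ 1 := by
    intro u
    have : 1 ≤ (iset C u).card := Finset.card_pos.mpr (hne u)
    rw [div_le_one (by exact_mod_cast this)]
    exact_mod_cast this
  have hb2 : ∀ u : ZMod n, (iset C u).card ≠ 1 → (1 : ℚ) / (iset C u).card ≤ 1 / 2 := by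
    intro u hu
    have h1 : 1 ≤ (iset C u).card := Finset.card_pos.mpr (hne u)
    have h2' : (2 : ℚ) ≤ (iset C u).card := by exact_mod_cast (by omega : 2 ≤ (iset C u).card)
    exact one_div_le_one_div_of_le (by norm_num) h2'
  -- expand the share as a sum of five terms
  have hshare : share C c = (1 : ℚ) / (iset C (c - 3)).card + (1 : ℚ) / (iset C (c - 1)).card
      + (1 : ℚ) / (iset C c).card + (1 : ℚ) / (iset C (c + 1)).card
      + (1 : ℚ) / (iset C (c + 3)).card := by
    rw [share]
    show ∑ u ∈ ({c - 3, c - 1, c, c + 1, c + 3} : Finset (ZMod n)), (1 : ℚ) / (iset C u).card = _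
    rw [Finset.sum_insert (by simp [d12, d13, d14, d15]),
        Finset.sum_insert (by simp [d23, d24, d25]),
        Finset.sum_insert (by simp [d34, d35]),
        Finset.sum_insert (by simp [d45]),
        Finset.sum_singleton]
    ring
  rw [hshare]
  by_cases e1 : (iset C (c - 3)).card = 1
  · have b2 := hb2 _ (fun h => hone _ _ d12 m1 m2 e1 h)
    have b3 := hb2 _ (fun h => hone _ _ d13 m1 m3 e1 h)
    have b4 := hb2 _ (fun h => hone _ _ d14 m1 m4 e1 h)
    have b5 := hb2 _ (fun h => hone _ _ d15 m1 m5 e1 h)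
    have b1 := hb1 (c - 3)
    linarith
  · have b1 := hb2 _ e1
    by_cases e2 : (iset C (c - 1)).card = 1
    · have b3 := hb2 _ (fun h => hone _ _ d23 m2 m3 e2 h)
      have b4 := hb2 _ (fun h => hone _ _ d24 m2 m4 e2 h)
      have b5 := hb2 _ (fun h => hone _ _ d25 m2 m5 e2 h)
      have b2 := hb1 (c - 1)
      linarith
    · have b2 := hb2 _ e2
      by_cases e3 : (iset C c).card = 1
      · have b4 := hb2 _ (fun h => hone _ _ d34 m3 m4 e3 h)
        have b5 := hb2 _ (fun h => hone _ _ d35 m3 m5 e3 h)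
        have b3 := hb1 c
        linarith
      · have b3 := hb2 _ e3
        by_cases e4 : (iset C (c + 1)).card = 1
        · have b5 := hb2 _ (fun h => hone _ _ d45 m4 m5 e4 h)
          have b4 := hb1 (c + 1)
          linarith
        · have b4 := hb2 _ e4
          have b5 := hb1 (c + 3)
          linarith
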